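/- Let n ≥ 1 and let α₁, …, αₙ be distinct positive even integers. If F = diag(f₁, …, fₙ) is any real diagonal matrix such that det(s·Iₙ − B·F) = ∏_{i=1}^n (s − (αᵢ² − 1)) as polynomials in s, then fᵢ > 0 for every i = 1, …, n (i.e., F is positive definite). -/

import Mathlib

open Matrix Polynomial

noncomputable section

/-- The `n × n` tridiagonal matrix `B` of the Marx generator. -/
def marxB (n : ℕ) : Matrix (Fin n) (Fin n) ℝ :=
  Matrix.of fun i j =>
    if i = j then (if (i : ℕ) = n - 1 then ((n : ℝ) + 1) / n else 2)
    else if (i : ℕ) + 1 = (j : ℕ) ∨ (j : ℕ) + 1 = (i : ℕ) then -1 else 0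

section aux
variable {n : ℕ}

lemma charpoly_conj' (P Q M : Matrix (Fin n) (Fin n) ℝ) (h : P * Q = 1) :
    (P * M * Q).charpoly = M.charpoly := by
  have key : charmatrix (P * M * Q)
      = (C : ℝ →+* ℝ[X]).mapMatrix P * charmatrix M * (C : ℝ →+* ℝ[X]).mapMatrix Q := by
    simp only [charmatrix, mul_sub, sub_mul, _root_.map_mul]
    congr 1
    · have h1 : (C : ℝ →+* ℝ[X]).mapMatrix P * (C : ℝ →+* ℝ[X]).mapMatrix Q = 1 := by
        rw [← _root_.map_mul, h, _root_.map_one]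
      have hc : Matrix.scalar (Fin n) (X : ℝ[X]) * (C : ℝ →+* ℝ[X]).mapMatrix Q
          = (C : ℝ →+* ℝ[X]).mapMatrix Q * Matrix.scalar (Fin n) (X : ℝ[X]) :=
        (Matrix.scalar_commute _ (fun r => Commute.all _ _) _)
      rw [mul_assoc, hc, ← mul_assoc, h1, one_mul]
  have hd : ((C : ℝ →+* ℝ[X]).mapMatrix P).det * ((C : ℝ →+* ℝ[X]).mapMatrix Q).det = 1 := by
    rw [← det_mul, ← _root_.map_mul, h, _root_.map_one, det_one]
  rw [Matrix.charpoly, key, det_mul, det_mul, Matrix.charpoly]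
  calc (C.mapMatrix P).det * (charmatrix M).det * (C.mapMatrix Q).det
      = (charmatrix M).det * ((C.mapMatrix P).det * (C.mapMatrix Q).det) := by ring
    _ = (charmatrix M).det := by rw [hd, mul_one]

lemma posdef_conj {S : Matrix (Fin n) (Fin n) ℝ} (hS : S.PosDef)
    (P : Matrix (Fin n) (Fin n) ℝ) (hP : IsUnit P.det) : (Pᵀ * S * P).PosDef := by
  refine PosDef.of_dotProduct_mulVec_pos ?_ ?_
  · have h := hS.isHermitian
    show (Pᵀ * S * P)ᴴ = _
    rw [conjTranspose_mul, conjTranspose_mul]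
    rw [show (Pᵀ)ᴴ = P by ext i j; simp [conjTranspose_apply],
      show Sᴴ = S from h, show Pᴴ = Pᵀ by ext i j; simp [conjTranspose_apply], mul_assoc]
  · intro x hx
    have hx' : P *ᵥ x ≠ 0 := by
      intro h0
      apply hx
      have : P⁻¹ *ᵥ (P *ᵥ x) = x := by
        rw [mulVec_mulVec, Matrix.nonsing_inv_mul _ hP, one_mulVec]
      rw [h0, mulVec_zero] at this
      exact this.symm
    have h2 := hS.dotProduct_mulVec_pos hx'
    convert h2 using 1
    have hstar : ∀ v : Fin n → ℝ, star v = v := fun v => rfl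
    rw [hstar, hstar, ← mulVec_mulVec, ← mulVec_mulVec, dotProduct_mulVec,
      vecMul_transpose]

end aux

lemma marxB_herm (n : ℕ) : (marxB n).IsHermitian := by
  show (marxB n)ᴴ = marxB n
  ext i j
  simp only [conjTranspose_apply, marxB, Matrix.of_apply, star_trivial]
  by_cases h : i = j
  · subst h; rfl
  · rw [if_neg (Ne.symm h), if_neg h]
    exact if_congr or_comm rfl rfl

lemma marxB_posDef (n : ℕ) (hn : 1 ≤ n) : (marxB n).PosDef := by
  refine PosDef.of_dotProduct_mulVec_pos (marxB_herm n) fun x hx => ?_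
  have hstar : (star x : Fin n → ℝ) = x := rfl
  rw [hstar]
  set y : ℕ → ℝ := fun k => if h : k < n then x ⟨k, h⟩ else 0 with hy
  -- sum of indicator
  have hind : ∀ k : ℕ, (∑ j : Fin n, (if (j : ℕ) = k then x j else 0)) = y k := by
    intro k
    by_cases hk : k < n
    · rw [Finset.sum_eq_single ⟨k, hk⟩]
      · simp [hy, hk]
      · intro b _ hb
        rw [if_neg]
        intro hc
        exact hb (by ext; simp [hc])
      · simp
    · rw [Finset.sum_eq_zero, hy]
      · simp [hk]
      · intro b _
        rw [if_neg]
        omega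
  have hrow : ∀ i : Fin n, (marxB n *ᵥ x) i
      = (if (i : ℕ) = n - 1 then ((n : ℝ) + 1) / n else 2) * x i
        - y ((i : ℕ) + 1) - (if 0 < (i : ℕ) then y ((i : ℕ) - 1) else 0) := by
    intro i
    have hsplit : ∀ j : Fin n, marxB n i j * x j
        = (if i = j then (if (i : ℕ) = n - 1 then ((n : ℝ) + 1) / n else 2) * x j else 0)
          + (-(if (j : ℕ) = (i : ℕ) + 1 then x j else 0))
          + (-(if 0 < (i : ℕ) ∧ (j : ℕ) = (i : ℕ) - 1 then x j else 0)) := by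
      intro j
      simp only [marxB, Matrix.of_apply]
      by_cases h1 : i = j
      · subst h1
        split_ifs <;> first | ring1 | (exfalso; omega)
      · have hne : (i : ℕ) ≠ (j : ℕ) := fun hc => h1 (Fin.ext hc)
        split_ifs <;> first | ring1 | (exfalso; omega)
    have e1 : (∑ j : Fin n, if i = j then (if (i : ℕ) = n - 1 then ((n : ℝ) + 1) / n else 2) * x j else 0)
        = (if (i : ℕ) = n - 1 then ((n : ℝ) + 1) / n else 2) * x i := by
      rw [Finset.sum_ite_eq, if_pos (Finset.mem_univ i)]
    have e2 : (∑ j : Fin n, if (j : ℕ) = (i : ℕ) + 1 then x j else 0) = y ((i : ℕ) + 1) :=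
      hind _
    have e3 : (∑ j : Fin n, if 0 < (i : ℕ) ∧ (j : ℕ) = (i : ℕ) - 1 then x j else 0)
        = (if 0 < (i : ℕ) then y ((i : ℕ) - 1) else 0) := by
      by_cases h0 : 0 < (i : ℕ)
      · rw [if_pos h0, ← hind ((i : ℕ) - 1)]
        refine Finset.sum_congr rfl fun j _ => if_congr (by simp [h0]) rfl rfl
      · rw [if_neg h0, Finset.sum_eq_zero]
        intro j _
        rw [if_neg (by omega)]
    show (∑ j : Fin n, marxB n i j * x j) = _
    simp only [hsplit]
    rw [Finset.sum_add_distrib, Finset.sum_add_distrib, Finset.sum_neg_distrib,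
      Finset.sum_neg_distrib, e1, e2, e3]
    ring
  obtain ⟨m, rfl⟩ : ∃ m, n = m + 1 := ⟨n - 1, by omega⟩
  have hyn : ∀ k, (m + 1) ≤ k → y k = 0 := by
    intro k hk
    simp only [hy]
    rw [dif_neg (by omega)]
  have hyx : ∀ i : Fin (m + 1), x i = y (i : ℕ) := by
    intro i
    simp only [hy]
    rw [dif_pos i.isLt]
  have key : x ⬝ᵥ (marxB (m + 1) *ᵥ x)
      = ∑ k ∈ Finset.range (m + 1), (y k *
        ((if k = (m + 1) - 1 then (((m + 1) : ℝ) + 1) / (m + 1) else 2) * y k - y (k + 1)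
          - (if 0 < k then y (k - 1) else 0))) := by
    show (∑ i : Fin (m + 1), x i * (marxB (m + 1) *ᵥ x) i) = _
    rw [← Fin.sum_univ_eq_sum_range]
    refine Finset.sum_congr rfl fun i _ => ?_
    rw [hrow i, hyx i]
    push_cast
    ring_nf
  rw [key]
  -- abbreviations
  set T := ∑ k ∈ Finset.range m, y k ^ 2 with hT
  set U := ∑ k ∈ Finset.range m, y k * y (k + 1) with hU
  have hQ : (∑ k ∈ Finset.range (m + 1), (y k *
        ((if k = (m + 1) - 1 then (((m + 1) : ℝ) + 1) / (m + 1) else 2) * y k - y (k + 1)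
          - (if 0 < k then y (k - 1) else 0))))
      = 2 * T + (((m + 1) : ℝ) + 1) / (m + 1) * y m ^ 2 - U - U := by
    have e : ∀ k ∈ Finset.range (m + 1), (y k *
        ((if k = (m + 1) - 1 then (((m + 1) : ℝ) + 1) / (m + 1) else 2) * y k - y (k + 1)
          - (if 0 < k then y (k - 1) else 0)))
        = (if k = (m + 1) - 1 then (((m + 1) : ℝ) + 1) / (m + 1) else 2) * y k ^ 2 - y k * y (k + 1)
          - (if 0 < k then y k * y (k - 1) else 0) := by
      intro k _
      split_ifs <;> ring
    rw [Finset.sum_congr rfl e, Finset.sum_sub_distrib, Finset.sum_sub_distrib]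
    have ea : (∑ k ∈ Finset.range (m + 1), (if k = (m + 1) - 1 then (((m + 1) : ℝ) + 1) / (m + 1) else 2) * y k ^ 2)
        = 2 * T + (((m + 1) : ℝ) + 1) / (m + 1) * y m ^ 2 := by
      rw [Finset.sum_range_succ, if_pos (show m = m + 1 - 1 by omega)]
      congr 1
      rw [hT, Finset.mul_sum]
      exact Finset.sum_congr rfl fun k hk => by
        rw [if_neg (by simp only [Finset.mem_range] at hk; omega)]
    have eb : (∑ k ∈ Finset.range (m + 1), y k * y (k + 1)) = U := by
      rw [Finset.sum_range_succ, hyn (m + 1) le_rfl, mul_zero, add_zero]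
    have ec : (∑ k ∈ Finset.range (m + 1), (if 0 < k then y k * y (k - 1) else 0)) = U := by
      rw [Finset.sum_range_succ', if_neg (lt_irrefl 0), add_zero, hU]
      exact Finset.sum_congr rfl fun k _ => by
        rw [if_pos (Nat.succ_pos k), Nat.add_sub_cancel, mul_comm]
    rw [ea, eb, ec]
  rw [hQ]
  have hid : 2 * T + (((m + 1) : ℝ) + 1) / (m + 1) * y m ^ 2 - U - U
      = y 0 ^ 2 + (∑ k ∈ Finset.range m, (y k - y (k + 1)) ^ 2) + (1 / (m + 1)) * y m ^ 2 := by
    have e1 : (∑ k ∈ Finset.range m, (y k - y (k + 1)) ^ 2)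
        = T + (∑ k ∈ Finset.range m, y (k + 1) ^ 2) - 2 * U := by
      have : ∀ k ∈ Finset.range m, (y k - y (k + 1)) ^ 2
          = y k ^ 2 + y (k + 1) ^ 2 - 2 * (y k * y (k + 1)) := fun k _ => by ring
      rw [Finset.sum_congr rfl this, Finset.sum_sub_distrib, Finset.sum_add_distrib,
        ← Finset.mul_sum]
    have e2 : (∑ k ∈ Finset.range m, y (k + 1) ^ 2) = T + y m ^ 2 - y 0 ^ 2 := by
      have h3 : (∑ k ∈ Finset.range (m + 1), y k ^ 2) = T + y m ^ 2 :=
        Finset.sum_range_succ _ _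
      have h4 : (∑ k ∈ Finset.range (m + 1), y k ^ 2)
          = (∑ k ∈ Finset.range m, y (k + 1) ^ 2) + y 0 ^ 2 :=
        Finset.sum_range_succ' _ _
      rw [h4] at h3
      linarith
    have hn0 : ((m + 1) : ℝ) ≠ 0 := by positivity
    rw [e1, e2]
    field_simp
    ring
  rw [hid]
  -- positivity
  have hsq : 0 ≤ ∑ k ∈ Finset.range m, (y k - y (k + 1)) ^ 2 :=
    Finset.sum_nonneg fun k _ => sq_nonneg _
  have hnn : (0 : ℝ) ≤ y 0 ^ 2 + (∑ k ∈ Finset.range m, (y k - y (k + 1)) ^ 2)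
      + (1 / (m + 1)) * y m ^ 2 := by positivity
  rcases hnn.lt_or_eq with h | h
  · exact h
  · exfalso
    apply hx
    have h1 : y 0 ^ 2 = 0 ∧ (∑ k ∈ Finset.range m, (y k - y (k + 1)) ^ 2) = 0 := by
      constructor <;> nlinarith [sq_nonneg (y 0), sq_nonneg (y m), mul_nonneg
        (by positivity : (0:ℝ) ≤ 1 / ((m + 1):ℝ)) (sq_nonneg (y m))]
    have hy0 : y 0 = 0 := by
      have := h1.1
      nlinarith [this]
    have hstep : ∀ k ∈ Finset.range m, (y k - y (k + 1)) ^ 2 = 0 :=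
      (Finset.sum_eq_zero_iff_of_nonneg fun k _ => sq_nonneg _).mp h1.2
    have hall : ∀ k, k < (m + 1) → y k = 0 := by
      intro k
      induction k with
      | zero => intro _; exact hy0
      | succ k ih =>
        intro hk
        have hk' : k ∈ Finset.range m := Finset.mem_range.mpr (by omega)
        have := hstep k hk'
        have hdiff : y k = y (k + 1) := sub_eq_zero.mp (by
          have h2 := sq_eq_zero_iff.mp this
          simpa using h2)
        rw [← hdiff]
        exact ih (by omega)
    funext i
    rw [hyx i, hall _ i.isLt]
    rfl

lemma real_conjTranspose_eq_transpose (M : Matrix (Fin n) (Fin n) ℝ) : Mᴴ = Mᵀ := by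
  ext i j; simp [conjTranspose_apply]

/-- Lemma 1 of the paper: any real diagonal matrix `F = diag f`
solving the structured eigenvalue assignment `σ(BF) = {αᵢ² - 1}` with the `αᵢ`
distinct positive even integers is positive definite, i.e. all `fᵢ > 0`. -/
theorem statement1 (n : ℕ) (hn : 1 ≤ n) (α : Fin n → ℕ)
    (hdist : Function.Injective α) (hpos : ∀ i, 0 < α i) (heven : ∀ i, Even (α i))
    (f : Fin n → ℝ)
    (hspec : (marxB n * Matrix.diagonal f).charpoly
      = ∏ i, (Polynomial.X - Polynomial.C ((α i : ℝ) ^ 2 - 1))) :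
    ∀ i, 0 < f i := by
  have hB := marxB_posDef n hn
  set R := (open scoped MatrixOrder in CFC.sqrt (marxB n)) with hRdef
  have hRps : R.PosSemidef := open scoped MatrixOrder in (CFC.sqrt_nonneg (marxB n)).posSemidef
  have hRH : Rᴴ = R := hRps.1
  have hRT : Rᵀ = R := by rw [← real_conjTranspose_eq_transpose, hRH]
  have hRR : R * R = marxB n := open scoped MatrixOrder in CFC.sqrt_mul_sqrt_self _ hB.posSemidef.nonneg
  have hdetR : IsUnit R.det := by
    have hdd : R.det * R.det = (marxB n).det := by rw [← det_mul, hRR]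
    have hBdet : 0 < (marxB n).det := hB.det_pos
    refine isUnit_iff_ne_zero.mpr fun h0 => ?_
    rw [h0, mul_zero] at hdd
    linarith
  set S := R * Matrix.diagonal f * R with hSdef
  have hSchar : S.charpoly = (marxB n * Matrix.diagonal f).charpoly := by
    have hSc : S = R⁻¹ * (marxB n * Matrix.diagonal f) * R := by
      rw [← hRR, hSdef]
      simp only [← Matrix.mul_assoc]
      rw [Matrix.nonsing_inv_mul _ hdetR, Matrix.one_mul]
    rw [hSc, charpoly_conj' _ _ _ (Matrix.nonsing_inv_mul _ hdetR)]
  have hSH : S.IsHermitian := by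
    show Sᴴ = S
    rw [hSdef, conjTranspose_mul, conjTranspose_mul, hRH, diagonal_conjTranspose]
    rw [show star f = f from rfl, Matrix.mul_assoc]
  -- positivity of the prescribed eigenvalues
  have hlam : ∀ j : Fin n, 0 < (α j : ℝ) ^ 2 - 1 := by
    intro j
    have h2 : 2 ≤ α j := by
      rcases heven j with ⟨r, hr⟩
      have := hpos j
      omega
    have h2' : (2 : ℝ) ≤ (α j : ℝ) := by exact_mod_cast h2
    nlinarith
  -- charpoly of S equals the product over eigenvalues and over the λ's
  set U : Matrix (Fin n) (Fin n) ℝ := (hSH.eigenvectorUnitary : Matrix (Fin n) (Fin n) ℝ)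
    with hUdef
  have hUU : U * star U = 1 := Matrix.mem_unitaryGroup_iff.mp hSH.eigenvectorUnitary.2
  have hspec2 : S = U * Matrix.diagonal (RCLike.ofReal ∘ hSH.eigenvalues) * star U :=
    hSH.spectral_theorem
  have hdiagchar :
      (Matrix.diagonal (RCLike.ofReal ∘ hSH.eigenvalues) : Matrix (Fin n) (Fin n) ℝ).charpoly
        = ∏ j, (X - C (hSH.eigenvalues j)) := by
    rw [Matrix.charpoly_of_upperTriangular _ (Matrix.blockTriangular_diagonal _)]
    refine Finset.prod_congr rfl fun j _ => ?_
    simp [Matrix.diagonal_apply_eq]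
  have heq : (∏ j, (X - C (hSH.eigenvalues j)) : ℝ[X])
      = ∏ j, (X - C ((α j : ℝ) ^ 2 - 1)) := by
    rw [← hdiagchar, ← charpoly_conj' U (star U) _ hUU, ← hspec2, hSchar, hspec]
  have hev : ∀ i, 0 < hSH.eigenvalues i := by
    intro i
    have h0 : Polynomial.eval (hSH.eigenvalues i) (∏ j, (X - C (hSH.eigenvalues j)) : ℝ[X])
        = 0 := by
      rw [Polynomial.eval_prod]
      refine Finset.prod_eq_zero (Finset.mem_univ i) ?_
      simp
    rw [heq, Polynomial.eval_prod] at h0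
    obtain ⟨j, -, hj⟩ := Finset.prod_eq_zero_iff.mp h0
    simp only [Polynomial.eval_sub, Polynomial.eval_X, Polynomial.eval_C, sub_eq_zero] at hj
    rw [hj]
    exact hlam j
  have hDpd : (Matrix.diagonal (RCLike.ofReal ∘ hSH.eigenvalues)
      : Matrix (Fin n) (Fin n) ℝ).PosDef :=
    Matrix.PosDef.diagonal fun i => by simpa using hev i
  have hdetU : IsUnit (star U).det := by
    refine IsUnit.of_mul_eq_one U.det ?_
    rw [mul_comm, ← det_mul, hUU, det_one]
  have hSpd : S.PosDef := by
    have h1 := posdef_conj hDpd (star U) hdetU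
    have h2 : (star U)ᵀ = U := by
      have : (star U) = Uᵀ := by
        rw [show (star U) = Uᴴ from rfl, real_conjTranspose_eq_transpose]
      rw [this, transpose_transpose]
    rw [h2] at h1
    rwa [← hspec2] at h1
  have hFpd : (Matrix.diagonal f).PosDef := by
    have h1 := posdef_conj hSpd R⁻¹ (by simpa using hdetR.inv)
    have h2 : (R⁻¹)ᵀ = R⁻¹ := by rw [Matrix.transpose_nonsing_inv, hRT]
    rw [h2] at h1
    have h3 : R⁻¹ * S * R⁻¹ = Matrix.diagonal f := by
      rw [hSdef]
      simp only [← Matrix.mul_assoc]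
      rw [Matrix.nonsing_inv_mul _ hdetR, Matrix.one_mul, Matrix.mul_assoc,
        Matrix.mul_nonsing_inv _ hdetR, Matrix.mul_one]
    rwa [h3] at h1
  exact fun i => Matrix.posDef_diagonal_iff.mp hFpd i

end
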